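/- Let $q \in \mathbb{C}$ be nonzero and not a root of unity, and let $(X, Y)$ be a pair of $n\times n$ matrices with $n > 1$ satisfying $XY = qYX$. Then $(X,Y)$ is reducible, i.e., $X$ and $Y$ have a common invariant subspace other than $0$ and $\mathbb{C}^n$. -/

import Mathlib

open Module Matrix

/-- A matrix whose `mulVec` kills everything is zero. -/
lemma matrix_eq_zero_of_mulVec {n : ℕ} (M : Matrix (Fin n) (Fin n) ℂ)
    (h : ∀ v, M *ᵥ v = 0) : M = 0 := by
  ext i j
  have := congrFun (h (Pi.single j 1)) i
  simpa [Matrix.mulVec_single] using this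

/-- If `q ≠ 0` is not a root of unity and `XY = qYX` with `n > 1`, then `(X, Y)` is
reducible: there is a common invariant subspace other than `⊥` and `⊤`. -/
theorem stmt_15 {n : ℕ} (hn : 1 < n) (q : ℂ) (hq0 : q ≠ 0)
    (hq : ∀ k : ℕ, 0 < k → q ^ k ≠ 1)
    (X Y : Matrix (Fin n) (Fin n) ℂ) (hXY : X * Y = q • (Y * X)) :
    ∃ K : Submodule ℂ (Fin n → ℂ), K ≠ ⊥ ∧ K ≠ ⊤ ∧
      K.map X.mulVecLin ≤ K ∧ K.map Y.mulVecLin ≤ K := by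
  haveI : Nonempty (Fin n) := ⟨⟨0, by omega⟩⟩
  have hfinrank : Module.finrank ℂ (Fin n → ℂ) = n := by
    simp [Module.finrank_pi]
  set f : Module.End ℂ (Fin n → ℂ) := X.mulVecLin with hf
  set g : Module.End ℂ (Fin n → ℂ) := Y.mulVecLin with hg
  have hcomm : ∀ v, f (g v) = q • g (f v) := by
    intro v
    show X *ᵥ (Y *ᵥ v) = q • (Y *ᵥ (X *ᵥ v))
    rw [Matrix.mulVec_mulVec, Matrix.mulVec_mulVec, hXY, Matrix.smul_mulVec]
  have key : ∀ (μ : ℂ) (v), f v = μ • v → f (g v) = (q * μ) • g v := by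
    intro μ v hv
    rw [hcomm, hv, g.map_smul, smul_smul]
  -- helper for the `span of eigenvector` cases
  have span_ne : ∀ v : Fin n → ℂ, v ≠ 0 → (ℂ ∙ v) ≠ ⊥ ∧ (ℂ ∙ v) ≠ ⊤ := by
    intro v hv
    refine ⟨by simpa [Submodule.span_singleton_eq_bot] using hv, ?_⟩
    intro htop
    have h1 : Module.finrank ℂ (ℂ ∙ v) = 1 := finrank_span_singleton hv
    rw [htop, finrank_top, hfinrank] at h1
    omega
  by_cases hY : Y = 0
  · obtain ⟨μ, hμ⟩ := Module.End.exists_eigenvalue f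
    obtain ⟨v, hv⟩ := hμ.exists_hasEigenvector
    refine ⟨ℂ ∙ v, (span_ne v hv.2).1, (span_ne v hv.2).2, ?_, ?_⟩
    · rintro x ⟨w, hw, rfl⟩
      obtain ⟨c, rfl⟩ := Submodule.mem_span_singleton.1 hw
      show f (c • v) ∈ _
      rw [f.map_smul, hv.apply_eq_smul, smul_smul]
      exact Submodule.smul_mem _ _ (Submodule.mem_span_singleton_self v)
    · rintro x ⟨w, _, rfl⟩
      show Y.mulVecLin w ∈ _
      simp [hY]
  by_cases hX : X = 0
  · obtain ⟨μ, hμ⟩ := Module.End.exists_eigenvalue g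
    obtain ⟨v, hv⟩ := hμ.exists_hasEigenvector
    refine ⟨ℂ ∙ v, (span_ne v hv.2).1, (span_ne v hv.2).2, ?_, ?_⟩
    · rintro x ⟨w, _, rfl⟩
      show X.mulVecLin w ∈ _
      simp [hX]
    · rintro x ⟨w, hw, rfl⟩
      obtain ⟨c, rfl⟩ := Submodule.mem_span_singleton.1 hw
      show g (c • v) ∈ _
      rw [g.map_smul, hv.apply_eq_smul, smul_smul]
      exact Submodule.smul_mem _ _ (Submodule.mem_span_singleton_self v)
  by_cases hker : LinearMap.ker f = ⊥
  · -- X injective: eigenvalue chain argument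
    obtain ⟨lam, hlam⟩ := Module.End.exists_eigenvalue f
    have hlam0 : lam ≠ 0 := by
      rintro rfl
      obtain ⟨v, hv⟩ := hlam.exists_hasEigenvector
      have : f v = 0 := by rw [hv.apply_eq_smul, zero_smul]
      exact hv.2 (by simpa [hker] using (LinearMap.mem_ker.2 this))
    have hinj : Function.Injective (fun k : ℕ => q ^ k * lam) := by
      intro k j hkj
      by_contra hne
      wlog hlt : k < j generalizing k j
      · exact this hkj.symm (Ne.symm hne) (by omega)
      simp only at hkj
      have hkj' : q ^ k = q ^ j := mul_right_cancel₀ hlam0 hkj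
      have hpow : q ^ k * q ^ (j - k) = q ^ k * 1 := by
        rw [← pow_add, mul_one, hkj']; congr 1; omega
      have : q ^ (j - k) = 1 := mul_left_cancel₀ (pow_ne_zero k hq0) hpow
      exact hq (j - k) (by omega) this
    set S : Set ℕ := {k : ℕ | f.HasEigenvalue (q ^ k * lam)} with hS
    have hSfin : S.Finite :=
      Set.Finite.preimage hinj.injOn f.finite_hasEigenvalue
    have h0S : 0 ∈ S := by simpa [hS] using hlam
    obtain ⟨m, hmS, hmax⟩ := hSfin.exists_maximalFor id S ⟨0, h0S⟩
    have hm1 : (m + 1) ∉ S := fun h => by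
      have := hmax h (Nat.le_succ m)
      simp at this
    have htriv : Module.End.eigenspace f (q ^ (m + 1) * lam) = ⊥ := by
      by_contra h
      exact hm1 h
    refine ⟨Module.End.eigenspace f (q ^ m * lam), hmS, ?_, ?_, ?_⟩
    · -- not top: otherwise g = 0, Y = 0
      intro htop
      apply hY
      apply matrix_eq_zero_of_mulVec
      intro v
      have hv : f v = (q ^ m * lam) • v := by
        have : v ∈ Module.End.eigenspace f (q ^ m * lam) := htop ▸ Submodule.mem_top
        exact Module.End.mem_eigenspace_iff.1 this
      have : g v ∈ Module.End.eigenspace f (q ^ (m + 1) * lam) := by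
        rw [Module.End.mem_eigenspace_iff]
        have := key _ v hv
        rw [this]; ring_nf
      rw [htriv, Submodule.mem_bot] at this
      exact this
    · rintro x ⟨w, hw, rfl⟩
      have hw' : f w = (q ^ m * lam) • w := Module.End.mem_eigenspace_iff.1 hw
      show f w ∈ _
      rw [hw']
      exact Submodule.smul_mem _ _ hw
    · rintro x ⟨w, hw, rfl⟩
      have hw' : f w = (q ^ m * lam) • w := Module.End.mem_eigenspace_iff.1 hw
      have : g w ∈ Module.End.eigenspace f (q ^ (m + 1) * lam) := by
        rw [Module.End.mem_eigenspace_iff]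
        have := key _ w hw'
        rw [this]; ring_nf
      rw [htriv, Submodule.mem_bot] at this
      show g w ∈ _
      rw [this]
      exact Submodule.zero_mem _
  · -- kernel of X is a common invariant subspace
    refine ⟨LinearMap.ker f, hker, ?_, ?_, ?_⟩
    · intro htop
      apply hX
      apply matrix_eq_zero_of_mulVec
      intro v
      have : v ∈ LinearMap.ker f := htop ▸ Submodule.mem_top
      exact this
    · rintro x ⟨w, hw, rfl⟩
      show f w ∈ _
      rw [LinearMap.mem_ker.1 hw]
      exact Submodule.zero_mem _
    · rintro x ⟨w, hw, rfl⟩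
      show g w ∈ LinearMap.ker f
      rw [LinearMap.mem_ker]
      rw [hcomm, LinearMap.mem_ker.1 hw, map_zero, smul_zero]
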